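/- Let F(a_i) = Σ_{j≤i} u(a_j) be the cumulative distribution of a pmf u on an ordered finite set {a₁,…,a_m}. For any γ > 0, Σ_{i=1}^m u(a_i)/(γ + F(a_i)) ≤ log((1+γ)/γ). -/

import Mathlib

theorem cdf_weighted_sum_le_log
    (m : ℕ) (hm : 0 < m)
    (u : Fin m → ℝ)
    (hu_nonneg : ∀ a, 0 ≤ u a) (hu_sum : ∑ a, u a = 1)
    (F : Fin m → ℝ) (hF : ∀ i, F i = ∑ j ∈ Finset.univ.filter (fun j => j ≤ i), u j)
    (γ : ℝ) (hγ : 0 < γ) :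
    ∑ i, u i / (γ + F i) ≤ Real.log ((1 + γ) / γ) := by
  set S : ℕ → ℝ := fun k => γ + ∑ j ∈ Finset.univ.filter (fun j : Fin m => (j : ℕ) < k), u j
    with hS
  clear_value S
  have hSpos : ∀ k, 0 < S k := by
    intro k
    have : 0 ≤ ∑ j ∈ Finset.univ.filter (fun j : Fin m => (j : ℕ) < k), u j :=
      Finset.sum_nonneg fun j _ => hu_nonneg j
    simp only [hS]; linarith
  have hstep : ∀ i : Fin m, S ((i : ℕ) + 1) = S (i : ℕ) + u i := by
    intro i
    have hins : Finset.univ.filter (fun j : Fin m => (j : ℕ) < (i : ℕ) + 1)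
        = insert i (Finset.univ.filter (fun j : Fin m => (j : ℕ) < (i : ℕ))) := by
      ext j
      simp [Nat.lt_succ_iff_lt_or_eq, Fin.ext_iff]
      simp only [Fin.le_def, Fin.lt_def]; omega
    have hnot : i ∉ Finset.univ.filter (fun j : Fin m => (j : ℕ) < (i : ℕ)) := by simp
    simp only [hS, hins, Finset.sum_insert hnot]
    ring
  have hFS : ∀ i : Fin m, γ + F i = S ((i : ℕ) + 1) := by
    intro i
    have : Finset.univ.filter (fun j : Fin m => j ≤ i)
        = Finset.univ.filter (fun j : Fin m => (j : ℕ) < (i : ℕ) + 1) := by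
      ext j
      simp only [Finset.mem_filter, Finset.mem_univ, true_and, Fin.le_def]
      omega
    rw [hF, hS, this]
  have hS0 : S 0 = γ := by simp [hS]
  have hSm : S m = γ + 1 := by
    have : Finset.univ.filter (fun j : Fin m => (j : ℕ) < m) = Finset.univ := by
      ext j; simp [j.isLt]
    rw [hS]
    simp only [this, hu_sum]
  have key : ∀ i : Fin m, u i / (γ + F i) ≤ Real.log (S ((i:ℕ)+1)) - Real.log (S (i:ℕ)) := by
    intro i
    rw [hFS i]
    have ha := hSpos (i : ℕ)
    have hb := hSpos ((i : ℕ) + 1)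
    have hdiv : 0 < S (i:ℕ) / S ((i:ℕ)+1) := div_pos ha hb
    have hlog := Real.log_le_sub_one_of_pos hdiv
    rw [Real.log_div ha.ne' hb.ne'] at hlog
    have hu : u i = S ((i:ℕ)+1) - S (i:ℕ) := by rw [hstep i]; ring
    rw [hu, div_le_iff₀ hb]
    have h1 : (S (i:ℕ) / S ((i:ℕ)+1)) * S ((i:ℕ)+1) = S (i:ℕ) := by field_simp
    have h5 : 1 - S (i:ℕ) / S ((i:ℕ)+1) ≤ Real.log (S ((i:ℕ)+1)) - Real.log (S (i:ℕ)) := by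
      linarith
    have h2 := mul_le_mul_of_nonneg_right h5 hb.le
    have h6 : (1 - S (i:ℕ) / S ((i:ℕ)+1)) * S ((i:ℕ)+1)
        = S ((i:ℕ)+1) - S (i:ℕ) / S ((i:ℕ)+1) * S ((i:ℕ)+1) := by ring
    linarith [h1, h2, h6]
  calc ∑ i, u i / (γ + F i)
      ≤ ∑ i : Fin m, (Real.log (S ((i:ℕ)+1)) - Real.log (S (i:ℕ))) :=
        Finset.sum_le_sum fun i _ => key i
    _ = Real.log (S m) - Real.log (S 0) := by
        rw [Fin.sum_univ_eq_sum_range (fun k => Real.log (S (k+1)) - Real.log (S k))]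
        exact Finset.sum_range_sub (fun k => Real.log (S k)) m
    _ = Real.log ((1 + γ) / γ) := by
        rw [hS0, hSm, Real.log_div (by linarith) hγ.ne']
        ring_nf
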